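/- If a queue machine M accepts input x (i.e., reaches the empty queue), then the session type encoding of its finite control is not an asynchronous subtype of the encoding of the initial queue: semT(s) ≰ semS(x$). In particular, for the single-consuming encoding [[·]], if [[s]]^∅ ≤ [[x$]] holds then M does not terminate on x. -/

import Mathlib

/-- Binary session types: output selection `⊕{lᵢ:Tᵢ}`, input branching `&{lᵢ:Tᵢ}`,
recursion `μt.T` (de Bruijn), variables, and `end`. Labels are natural numbers. -/
inductive SType : Type
  | out : List (Nat × SType) → SType
  | inp : List (Nat × SType) → SType
  | mu  : SType → SType
  | var : Nat → SType
  | done : SType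

mutual
/-- The dual of a session type: swap `⊕` and `&`. -/
def SType.dual : SType → SType
  | .out bs => .inp (dualBranches bs)
  | .inp bs => .out (dualBranches bs)
  | .mu t => .mu t.dual
  | .var n => .var n
  | .done => .done
def dualBranches : List (Nat × SType) → List (Nat × SType)
  | [] => []
  | (l, t) :: rest => (l, t.dual) :: dualBranches rest
end

mutual
/-- Substitution of `s` for the variable of de Bruijn index `k`. -/
def SType.subst (s : SType) : Nat → SType → SType
  | k, .out bs => .out (substBranches s k bs)
  | k, .inp bs => .inp (substBranches s k bs)
  | k, .mu t => .mu (SType.subst s (k+1) t)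
  | k, .var n => if n = k then s else .var n
  | _, .done => .done
def substBranches (s : SType) : Nat → List (Nat × SType) → List (Nat × SType)
  | _, [] => []
  | k, (l, t) :: rest => (l, SType.subst s k t) :: substBranches s k rest
end

mutual
/-- One-step unfolding of a session type. -/
def SType.unfold1 : SType → SType
  | .out bs => .out (unfold1Branches bs)
  | .inp bs => .inp (unfold1Branches bs)
  | .mu t => SType.subst (.mu t) 0 t
  | .var n => .var n
  | .done => .done
def unfold1Branches : List (Nat × SType) → List (Nat × SType)
  | [] => []
  | (l, t) :: rest => (l, t.unfold1) :: unfold1Branches rest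
end

/-- `n`-fold unfolding. -/
def SType.unfoldN : Nat → SType → SType
  | 0, t => t
  | n+1, t => (SType.unfoldN n t).unfold1

/-- A session type is single-out if every output selection has exactly one choice. -/
inductive SingleOut : SType → Prop
  | out {l t} : SingleOut t → SingleOut (.out [(l, t)])
  | inp {bs} : (∀ p ∈ bs, SingleOut p.2) → SingleOut (.inp bs)
  | mu {t} : SingleOut t → SingleOut (.mu t)
  | var {n} : SingleOut (.var n)
  | done : SingleOut .done

/-- A session type is single-in if every input branching has exactly one choice. -/
inductive SingleIn : SType → Prop
  | out {bs} : (∀ p ∈ bs, SingleIn p.2) → SingleIn (.out bs)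
  | inp {l t} : SingleIn t → SingleIn (.inp [(l, t)])
  | mu {t} : SingleIn t → SingleIn (.mu t)
  | var {n} : SingleIn (.var n)
  | done : SingleIn .done
/-- `T` contains at least one input branching. -/
inductive HasInp : SType → Prop
  | inp {bs} : HasInp (.inp bs)
  | out {bs l t} : (l, t) ∈ bs → HasInp t → HasInp (.out bs)
  | mu {t} : HasInp t → HasInp (.mu t)

/-- Input contexts: multi-hole contexts made of input branchings, holes are numbered. -/
inductive ICtx : Type
  | hole : Nat → ICtx
  | inp : List (Nat × ICtx) → ICtx

mutual
/-- Fill each hole `n` of the input context with `f n`. -/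
def ICtx.fill : ICtx → (Nat → SType) → SType
  | .hole n, f => f n
  | .inp bs, f => .inp (fillBranches bs f)
def fillBranches : List (Nat × ICtx) → (Nat → SType) → List (Nat × SType)
  | [], _ => []
  | (l, A) :: rest, f => (l, A.fill f) :: fillBranches rest f
end

mutual
/-- The list of hole indices occurring in an input context. -/
def ICtx.holes : ICtx → List Nat
  | .hole n => [n]
  | .inp bs => holesBranches bs
def holesBranches : List (Nat × ICtx) → List Nat
  | [] => []
  | (_, A) :: rest => A.holes ++ holesBranches rest
end

/-- Well-formed input context: holes are exactly `1..m` for some `m ≥ 1`,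
each occurring exactly once. -/
def ICtx.WF (A : ICtx) : Prop :=
  ∃ m : Nat, 1 ≤ m ∧ A.holes.Perm (List.range' 1 m)

/-- Labels of a branch list. -/
def labelsOf (bs : List (Nat × SType)) : List Nat := bs.map Prod.fst

def SubsetL (I J : List Nat) : Prop := ∀ l ∈ I, l ∈ J
def EqL (I J : List Nat) : Prop := ∀ l, l ∈ I ↔ l ∈ J

/-- `R` is an asynchronous subtyping relation, with flags:
`orphan`: include the no-orphan-message constraint in condition 2;
`outTotal`: require `I = J_k` in condition 2 (no output covariance);
`inTotal`: require `J = I` in condition 3 (no input contravariance). -/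
def IsSubRel (orphan outTotal inTotal : Bool) (R : SType → SType → Prop) : Prop :=
  ∀ T S, R T S →
    -- 1. end
    (T = .done → ∃ n, S.unfoldN n = .done) ∧
    -- 2. output selection
    (∀ bs, T = .out bs →
      ∃ (n : Nat) (A : ICtx) (Sb : Nat → List (Nat × SType)),
        A.WF ∧
        S.unfoldN n = A.fill (fun k => .out (Sb k)) ∧
        (∀ k ∈ A.holes,
          (outTotal = true → EqL (labelsOf bs) (labelsOf (Sb k))) ∧
          (outTotal = false → SubsetL (labelsOf bs) (labelsOf (Sb k)))) ∧
        (∀ l Ti, (l, Ti) ∈ bs → ∃ g : Nat → SType,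
          (∀ k ∈ A.holes, (Sb k).lookup l = some (g k)) ∧ R Ti (A.fill g)) ∧
        (orphan = true → A ≠ .hole 1 → ∀ l Ti, (l, Ti) ∈ bs → HasInp Ti)) ∧
    -- 3. input branching
    (∀ bs, T = .inp bs →
      ∃ (n : Nat) (Sb : List (Nat × SType)),
        S.unfoldN n = .inp Sb ∧
        (inTotal = true → EqL (labelsOf Sb) (labelsOf bs)) ∧
        (inTotal = false → SubsetL (labelsOf Sb) (labelsOf bs)) ∧
        (∀ l Sj, (l, Sj) ∈ Sb → ∃ Tj, bs.lookup l = some Tj ∧ R Tj Sj)) ∧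
    -- 4. recursion
    (∀ T', T = .mu T' → R (SType.subst T 0 T') S)

/-- An (orphan-message-free) asynchronous subtyping relation. -/
def IsAsyncSubRel (R : SType → SType → Prop) : Prop := IsSubRel true false false R

/-- Asynchronous subtyping `T ≤ S`. -/
def Subt (T S : SType) : Prop := ∃ R, IsAsyncSubRel R ∧ R T S

/-- `R` is dual closed: `(T,S) ∈ R` implies `(dual S, dual T) ∈ R`. -/
def DualClosed (R : SType → SType → Prop) : Prop :=
  ∀ T S, R T S → R S.dual T.dual

/-- An asynchronous dual closed subtyping relation: dual closed, and conditions
1, 3, 4 plus condition 2 without the no-orphan-message constraint. -/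
def IsDCSubRel (R : SType → SType → Prop) : Prop :=
  DualClosed R ∧ IsSubRel false false false R

/-- Asynchronous dual closed subtyping `T ≤_DC S`. -/
def SubtDC (T S : SType) : Prop := ∃ R, IsDCSubRel R ∧ R T S

/-- A queue machine over states `Q` and queue alphabet `Γ`, given by its
transition function `δ : Q × Γ → Q × Γ*`. -/
structure QM (Q Γ : Type) where
  delta : Q → Γ → Q × List Γ

/-- One step of a queue machine: `(p, Aα) → (q, αγ)` when `δ(p,A) = (q,γ)`. -/
def QStep {Q Γ : Type} (M : QM Q Γ) (c c' : Q × List Γ) : Prop :=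
  ∃ (A : Γ) (α : List Γ), c.2 = A :: α ∧
    c' = ((M.delta c.1 A).1, α ++ (M.delta c.1 A).2)

/-- Reachability in a queue machine. -/
def QSteps {Q Γ : Type} (M : QM Q Γ) : (Q × List Γ) → (Q × List Γ) → Prop :=
  Relation.ReflTransGen (QStep M)

/-- A queue machine is single consuming if it never performs two consecutive
transitions that both enqueue the empty string. -/
def SingleConsuming {Q Γ : Type} (M : QM Q Γ) : Prop :=
  ∀ q a q', M.delta q a = (q', []) → ¬ ∃ b q'', M.delta q' b = (q'', [])

/-- The single consuming encoding `E(M)`: states are doubled (`inl` unprimed,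
`inr` primed) and the queue alphabet gains the fresh symbol `#` (here `none`,
original symbols being `some a`). -/
def encodeSC {Q Γ : Type} [DecidableEq Γ] (M : QM Q Γ) : QM (Q ⊕ Q) (Option Γ) where
  delta
    | Sum.inl q, some a =>
        if (M.delta q a).2 = [] then (Sum.inr (M.delta q a).1, [])
        else (Sum.inl (M.delta q a).1, (M.delta q a).2.map some)
    | Sum.inl q, none => (Sum.inr q, [])
    | Sum.inr q, some a =>
        if (M.delta q a).2 = [] then (Sum.inl (M.delta q a).1, [none])
        else (Sum.inl (M.delta q a).1, (M.delta q a).2.map some)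
    | Sum.inr q, none => (Sum.inl q, [none])

/-- Erasure: unprime the state and delete every occurrence of `#` from the
queue. -/
def eraseConf {Q Γ : Type} (c : (Q ⊕ Q) × List (Option Γ)) : Q × List Γ :=
  (Sum.elim id id c.1, c.2.filterMap id)

/-- `T' = μt.&{A₁ : ⊕{A₂ : t}_{A₂∈Γ}}_{A₁∈Γ}`. -/
def Tp (Γl : List Nat) : SType :=
  .mu (.inp (Γl.map fun A1 => (A1, .out (Γl.map fun A2 => (A2, .var 0)))))

/-- `T'' = μt.&{A₁ : &{A₂ : ⊕{A₃ : t}_{A₃∈Γ}}_{A₂∈Γ}}_{A₁∈Γ}`. -/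
def Tpp (Γl : List Nat) : SType :=
  .mu (.inp (Γl.map fun A1 => (A1, .inp (Γl.map fun A2 =>
    (A2, .out (Γl.map fun A3 => (A3, .var 0)))))))

/-- `⟨B₁⋯B_m⟩ c`: writing of `B₁⋯B_m` into the queue, saturated on the whole
alphabet (wrong symbols continue as `T'`), followed by `c`. -/
def outCont (Γl : List Nat) : List Nat → SType → SType
  | [], c => c
  | B :: rest, c =>
      .out (Γl.map fun A' => (A', if A' = B then outCont Γl rest c else Tp Γl))

/-- Finite control encoding `[[q]]^visited` for single consuming queue
machines (with fuel, large enough when starting from the empty visited set). -/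
def BsemTAux {Q : Type} [DecidableEq Q] (delta : Q → Nat → Q × List Nat)
    (Γl : List Nat) : Nat → List Q → Q → SType
  | 0, _, _ => .done
  | fuel+1, visited, q =>
    if q ∈ visited then .var (visited.idxOf q)
    else .mu (.inp (Γl.map fun A =>
      (A, outCont Γl (delta q A).2 (BsemTAux delta Γl fuel (q :: visited) (delta q A).1))))

/-- Finite control encoding `[[q]]^∅`. -/
def BsemT {Q : Type} [Fintype Q] [DecidableEq Q] (delta : Q → Nat → Q × List Nat)
    (Γl : List Nat) (q : Q) : SType :=
  BsemTAux delta Γl (Fintype.card Q + 1) [] q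

/-- Encoding of the empty queue:
`μt.⊕{A : &({A : t} ⊎ {A' : T''}_{A'∈Γ∖{A}})}_{A∈Γ}`. -/
def BsemSNil (Γl : List Nat) : SType :=
  .mu (.out (Γl.map fun A => (A, .inp (Γl.map fun A' =>
    (A', if A' = A then .var 0 else Tpp Γl)))))

/-- Queue encoding `[[C₁⋯C_m]]` for single consuming queue machines. -/
def BsemS (Γl : List Nat) : List Nat → SType
  | [] => BsemSNil Γl
  | C :: rest =>
      .inp (Γl.map fun A' => (A', if A' = C then BsemS Γl rest else Tpp Γl))


namespace QMProof

/-! ### Basic map lemmas for the mutual helper functions -/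

theorem substBranches_eq_map (s : SType) (k : Nat) (bs : List (Nat × SType)) :
    substBranches s k bs = bs.map fun p => (p.1, SType.subst s k p.2) := by
  induction bs with
  | nil => rfl
  | cons p rest ih => cases p; simp [substBranches, ih]

theorem unfold1Branches_eq_map (bs : List (Nat × SType)) :
    unfold1Branches bs = bs.map fun p => (p.1, p.2.unfold1) := by
  induction bs with
  | nil => rfl
  | cons p rest ih => cases p; simp [unfold1Branches, ih]

theorem fillBranches_eq_map (bs : List (Nat × ICtx)) (f : Nat → SType) :
    fillBranches bs f = bs.map fun p => (p.1, p.2.fill f) := by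
  induction bs with
  | nil => rfl
  | cons p rest ih => cases p; simp [fillBranches, ih]

/-- Custom induction principle for the nested inductive `SType`. -/
theorem SType.myInd {motive : SType → Prop}
    (hout : ∀ bs, (∀ p ∈ bs, motive p.2) → motive (.out bs))
    (hinp : ∀ bs, (∀ p ∈ bs, motive p.2) → motive (.inp bs))
    (hmu : ∀ t, motive t → motive (.mu t))
    (hvar : ∀ n, motive (.var n))
    (hdone : motive .done) : ∀ t, motive t
  | .out bs => hout bs (fun p hp =>
      SType.myInd hout hinp hmu hvar hdone p.2)
  | .inp bs => hinp bs (fun p hp =>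
      SType.myInd hout hinp hmu hvar hdone p.2)
  | .mu t => hmu t (SType.myInd hout hinp hmu hvar hdone t)
  | .var n => hvar n
  | .done => hdone
  termination_by t => sizeOf t
  decreasing_by
  · have h1 := List.sizeOf_lt_of_mem hp
    obtain ⟨a, b⟩ := p
    simp at h1 ⊢
    omega
  · have h1 := List.sizeOf_lt_of_mem hp
    obtain ⟨a, b⟩ := p
    simp at h1 ⊢
    omega
  · simp
  
/-! ### Closedness -/

/-- All free variables are `< n`. -/
inductive Cl : Nat → SType → Prop
  | out {n bs} : (∀ p ∈ bs, Cl n p.2) → Cl n (.out bs)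
  | inp {n bs} : (∀ p ∈ bs, Cl n p.2) → Cl n (.inp bs)
  | mu {n t} : Cl (n+1) t → Cl n (.mu t)
  | var {n m} : m < n → Cl n (.var m)
  | done {n} : Cl n .done

theorem Cl.mono {n m : Nat} {t : SType} (h : Cl n t) (hnm : n ≤ m) : Cl m t := by
  induction h generalizing m with
  | out _ ih => exact Cl.out (fun p hp => ih p hp hnm)
  | inp _ ih => exact Cl.inp (fun p hp => ih p hp hnm)
  | mu _ ih => exact Cl.mu (ih (by omega))
  | var h => exact Cl.var (by omega)
  | done => exact Cl.done

theorem Cl.subst_id {n : Nat} {t : SType} (h : Cl n t) :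
    ∀ {s k}, n ≤ k → SType.subst s k t = t := by
  induction h with
  | @out n bs _ ih =>
    intro s k hk
    show SType.subst s k (.out bs) = .out bs
    rw [SType.subst, substBranches_eq_map]
    congr 1
    conv_rhs => rw [← List.map_id bs]
    exact List.map_congr_left (fun p hp => by rw [ih p hp hk]; exact Prod.mk.eta)
  | @inp n bs _ ih =>
    intro s k hk
    show SType.subst s k (.inp bs) = .inp bs
    rw [SType.subst, substBranches_eq_map]
    congr 1
    conv_rhs => rw [← List.map_id bs]
    exact List.map_congr_left (fun p hp => by rw [ih p hp hk]; exact Prod.mk.eta)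
  | @mu n t _ ih =>
    intro s k hk
    show SType.subst s k (.mu t) = .mu t
    rw [SType.subst, ih (by omega)]
  | @var n m h =>
    intro s k hk
    show SType.subst s k (.var m) = .var m
    rw [SType.subst]
    simp
    omega
  | done => intro s k hk; rfl


theorem Cl.subst_pres {s : SType} (hs : Cl 0 s) {m : Nat} {t : SType} (h : Cl m t) :
    ∀ {k}, Cl m (SType.subst s k t) := by
  induction h with
  | @out n bs _ ih =>
    intro k
    rw [SType.subst, substBranches_eq_map]
    exact Cl.out (fun p hp => by
      obtain ⟨q, hq, rfl⟩ := List.mem_map.mp hp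
      exact ih q hq)
  | @inp n bs _ ih =>
    intro k
    rw [SType.subst, substBranches_eq_map]
    exact Cl.inp (fun p hp => by
      obtain ⟨q, hq, rfl⟩ := List.mem_map.mp hp
      exact ih q hq)
  | @mu n t _ ih =>
    intro k
    rw [SType.subst]
    exact Cl.mu ih
  | @var n m h =>
    intro k
    rw [SType.subst]
    by_cases hmk : m = k
    · simp [hmk]; exact hs.mono (by omega)
    · simp [hmk]; exact Cl.var h
  | done => intro k; exact Cl.done

theorem Cl.subst_elim {s : SType} (hs : Cl 0 s) {M : Nat} {t : SType} (h : Cl M t) :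
    ∀ {n}, M = n + 1 → Cl n (SType.subst s n t) := by
  induction h with
  | @out m bs _ ih =>
    intro n hn
    rw [SType.subst, substBranches_eq_map]
    exact Cl.out (fun p hp => by
      obtain ⟨q, hq, rfl⟩ := List.mem_map.mp hp
      exact ih q hq hn)
  | @inp m bs _ ih =>
    intro n hn
    rw [SType.subst, substBranches_eq_map]
    exact Cl.inp (fun p hp => by
      obtain ⟨q, hq, rfl⟩ := List.mem_map.mp hp
      exact ih q hq hn)
  | @mu m t _ ih =>
    intro n hn
    rw [SType.subst]
    exact Cl.mu (ih (by omega))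
  | @var m j h =>
    intro n hn
    rw [SType.subst]
    by_cases hjn : j = n
    · simp [hjn]; exact hs.mono (by omega)
    · simp [hjn]; exact Cl.var (by omega)
  | done => intro n hn; exact Cl.done

theorem subst_comm {s s' : SType} (hs : Cl 0 s) (hs' : Cl 0 s') (t : SType) :
    ∀ {j k}, j ≠ k →
      SType.subst s j (SType.subst s' k t) = SType.subst s' k (SType.subst s j t) := by
  induction t using SType.myInd with
  | hout bs ih =>
    intro j k hjk
    simp only [SType.subst, substBranches_eq_map, List.map_map]
    congr 1
    exact List.map_congr_left (fun p hp => by simp [ih p hp hjk])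
  | hinp bs ih =>
    intro j k hjk
    simp only [SType.subst, substBranches_eq_map, List.map_map]
    congr 1
    exact List.map_congr_left (fun p hp => by simp [ih p hp hjk])
  | hmu t ih =>
    intro j k hjk
    simp only [SType.subst]
    rw [ih (by omega)]
  | hvar n =>
    intro j k hjk
    by_cases hnk : n = k <;> by_cases hnj : n = j
    · omega
    · subst hnk
      simp [SType.subst, hnj]
      exact (hs'.subst_id (by omega))
    · subst hnj
      simp [SType.subst, hnk]
      exact (hs.subst_id (by omega)).symm
    · simp only [SType.subst, if_neg hnk, if_neg hnj]
  | hdone => intro j k hjk; rfl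


theorem Cl_Tp (Γl : List Nat) : Cl 0 (Tp Γl) := by
  refine Cl.mu (Cl.inp fun p hp => ?_)
  obtain ⟨a, _, rfl⟩ := List.mem_map.mp hp
  refine Cl.out fun p' hp' => ?_
  obtain ⟨b, _, rfl⟩ := List.mem_map.mp hp'
  exact Cl.var (by omega)

theorem Cl_Tpp (Γl : List Nat) : Cl 0 (Tpp Γl) := by
  refine Cl.mu (Cl.inp fun p hp => ?_)
  obtain ⟨a, _, rfl⟩ := List.mem_map.mp hp
  refine Cl.inp fun p' hp' => ?_
  obtain ⟨b, _, rfl⟩ := List.mem_map.mp hp'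
  refine Cl.out fun p'' hp'' => ?_
  obtain ⟨c, _, rfl⟩ := List.mem_map.mp hp''
  exact Cl.var (by omega)

theorem subst_outCont (Γl : List Nat) (s : SType) (k : Nat) :
    ∀ (l : List Nat) (c : SType),
      SType.subst s k (outCont Γl l c) = outCont Γl l (SType.subst s k c) := by
  intro l
  induction l with
  | nil => intro c; rfl
  | cons B rest ih =>
    intro c
    simp only [outCont, SType.subst, substBranches_eq_map, List.map_map]
    congr 1
    refine List.map_congr_left fun a _ => ?_
    by_cases hab : a = B
    · simp [hab, ih]
    · simp [hab, (Cl_Tp Γl).subst_id (Nat.zero_le k)]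

theorem Cl_outCont {Γl : List Nat} {n : Nat} {c : SType} (hc : Cl n c) :
    ∀ l : List Nat, Cl n (outCont Γl l c) := by
  intro l
  induction l with
  | nil => exact hc
  | cons B rest ih =>
    simp only [outCont]
    refine Cl.out fun p hp => ?_
    obtain ⟨a, _, rfl⟩ := List.mem_map.mp hp
    by_cases hab : a = B
    · simpa [hab] using ih
    · simpa [hab] using (Cl_Tp Γl).mono (Nat.zero_le n)

theorem Cl_BsemTAux {Q : Type} [DecidableEq Q] (δ : Q → Nat → Q × List Nat)
    (Γl : List Nat) : ∀ (f : Nat) (v : List Q) (q : Q),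
    Cl v.length (BsemTAux δ Γl f v q) := by
  intro f
  induction f with
  | zero => intro v q; exact Cl.done
  | succ f ih =>
    intro v q
    by_cases hq : q ∈ v
    · simp only [BsemTAux, if_pos hq]
      exact Cl.var (List.idxOf_lt_length_iff.mpr hq)
    · simp only [BsemTAux, if_neg hq]
      refine Cl.mu (Cl.inp fun p hp => ?_)
      obtain ⟨a, _, rfl⟩ := List.mem_map.mp hp
      exact Cl_outCont (by simpa using ih (q :: v) (δ q a).1) _

/-! ### Multiple substitution -/

def msub : Nat → List SType → SType → SType
  | _, [], t => t
  | k, s :: E, t => msub (k+1) E (SType.subst s k t)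

theorem msub_closed {E : List SType} : ∀ {k} {t : SType}, Cl 0 t → msub k E t = t := by
  induction E with
  | nil => intro k t _; rfl
  | cons s E ih =>
    intro k t ht
    simp only [msub]
    rw [ht.subst_id (Nat.zero_le k), ih ht]

theorem msub_mu {E : List SType} : ∀ {k} {t : SType},
    msub k E (.mu t) = .mu (msub (k+1) E t) := by
  induction E with
  | nil => intro k t; rfl
  | cons s E ih =>
    intro k t
    simp only [msub, SType.subst]
    rw [ih]

theorem msub_inp {E : List SType} : ∀ {k} {bs : List (Nat × SType)},
    msub k E (.inp bs) = .inp (bs.map fun p => (p.1, msub k E p.2)) := by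
  induction E with
  | nil => intro k bs; simp [msub]
  | cons s E ih =>
    intro k bs
    simp only [msub, SType.subst, substBranches_eq_map]
    rw [ih, List.map_map]
    rfl

theorem msub_outCont {Γl : List Nat} {E : List SType} :
    ∀ {k} {l : List Nat} {c : SType},
      msub k E (outCont Γl l c) = outCont Γl l (msub k E c) := by
  induction E with
  | nil => intro k l c; rfl
  | cons s E ih =>
    intro k l c
    simp only [msub]
    rw [subst_outCont, ih]

theorem msub_var {E : List SType} (hE : ∀ s ∈ E, Cl 0 s) :
    ∀ {k j : Nat} (h : j - k < E.length), k ≤ j →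
      msub k E (.var j) = E[j - k]'h := by
  induction E with
  | nil => intro k j h _; simp at h
  | cons s E ih =>
    intro k j h hkj
    simp only [msub]
    by_cases hjk : j = k
    · subst hjk
      rw [show SType.subst s j (.var j) = s by simp [SType.subst]]
      rw [msub_closed (hE s (by simp))]
      simp
    · have h1 : j - (k+1) < E.length := by simp at h; omega
      simp only [SType.subst, if_neg hjk]
      rw [ih (fun x hx => hE x (by simp [hx])) h1 (by omega)]
      have h2 : j - k = (j - (k+1)) + 1 := by omega
      simp only [h2, List.getElem_cons_succ]

theorem msub_subst_comm {s : SType} (hs : Cl 0 s) {E : List SType}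
    (hE : ∀ x ∈ E, Cl 0 x) : ∀ {k j : Nat} {t : SType}, j < k →
      msub k E (SType.subst s j t) = SType.subst s j (msub k E t) := by
  induction E with
  | nil => intro k j t _; rfl
  | cons x E ih =>
    intro k j t hjk
    simp only [msub]
    rw [subst_comm (hE x (by simp)) hs t (by omega : k ≠ j),
        ih (fun y hy => hE y (by simp [hy])) (by omega)]

theorem msub_Cl {E : List SType} (hE : ∀ s ∈ E, Cl 0 s) :
    ∀ {k : Nat} {t : SType}, Cl (k + E.length) t → Cl k (msub k E t) := by
  induction E with
  | nil => intro k t h; simpa [msub] using h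
  | cons s E ih =>
    intro k t h
    simp only [msub]
    rw [msub_subst_comm (hE s (by simp)) (fun y hy => hE y (by simp [hy])) (by omega)]
    refine Cl.subst_elim (hE s (by simp)) ?_ rfl
    refine ih (fun y hy => hE y (by simp [hy])) ?_
    have : k + 1 + E.length = k + (s :: E).length := by simp; omega
    rw [this]
    exact h


/-! ### The predicate `Tm T q`: `T` is a closed representation of state `q` -/

inductive Tm {Q : Type} [DecidableEq Q] (δ : Q → Nat → Q × List Nat) (Γl : List Nat)
    (N : Nat) : SType → Q → Prop
  | mk (f : Nat) (v : List Q) (E : List SType) (q : Q) :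
      v.Nodup → N ≤ f + v.length → E.length = v.length →
      (∀ s ∈ E, Cl 0 s) →
      (∀ (j : Nat) (h1 : j < E.length) (h2 : j < v.length), Tm δ Γl N E[j] v[j]) →
      Tm δ Γl N (msub 0 E (BsemTAux δ Γl f v q)) q

theorem Tm_structure {Q : Type} [Fintype Q] [DecidableEq Q]
    {δ : Q → Nat → Q × List Nat} {Γl : List Nat} {T : SType} {q : Q}
    (h : Tm δ Γl (Fintype.card Q + 1) T q) :
    ∃ (Bod : SType) (g : Nat → SType), T = .mu Bod ∧
      SType.subst T 0 Bod = .inp (Γl.map fun A => (A, outCont Γl (δ q A).2 (g A))) ∧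
      ∀ A : Nat, Tm δ Γl (Fintype.card Q + 1) (g A) (δ q A).1 := by
  induction h with
  | mk f v E q hnd hN hlen hEcl hEtm ih =>
    have hvcard : v.length ≤ Fintype.card Q := List.Nodup.length_le_card hnd
    obtain ⟨f', rfl⟩ : ∃ f', f = f' + 1 := ⟨f - 1, by omega⟩
    by_cases hq : q ∈ v
    · -- variable case: use the environment
      have hidx : v.idxOf q < v.length := List.idxOf_lt_length_iff.mpr hq
      have hidxE : v.idxOf q - 0 < E.length := by omega
      have hT : msub 0 E (BsemTAux δ Γl (f'+1) v q) = E[v.idxOf q] := by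
        simp only [BsemTAux, if_pos hq]
        rw [msub_var hEcl hidxE (Nat.zero_le _)]
        congr 1
      have hvq : v[v.idxOf q] = q := List.getElem_idxOf hidx
      rw [hT]
      have := ih (v.idxOf q) (by omega) hidx
      rwa [hvq] at this
    · -- expansion case
      have hTcl : Cl 0 (msub 0 E (BsemTAux δ Γl (f'+1) v q)) := by
        refine msub_Cl hEcl ?_
        have := Cl_BsemTAux δ Γl (f'+1) v q
        rwa [show (0 + E.length) = v.length by omega]
      set T := msub 0 E (BsemTAux δ Γl (f'+1) v q) with hTdef
      have hTm : Tm δ Γl (Fintype.card Q + 1) T q :=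
        Tm.mk (f'+1) v E q hnd hN hlen hEcl hEtm
      refine ⟨msub 1 E (.inp (Γl.map fun A =>
        (A, outCont Γl (δ q A).2 (BsemTAux δ Γl f' (q :: v) (δ q A).1)))),
        fun A => msub 0 (T :: E) (BsemTAux δ Γl f' (q :: v) (δ q A).1), ?_, ?_, ?_⟩
    
      · conv_lhs => rw [hTdef]
        simp only [BsemTAux, if_neg hq]
        rw [msub_mu]
      · rw [msub_inp, List.map_map]
        rw [SType.subst, substBranches_eq_map, List.map_map]
        refine congrArg SType.inp (List.map_congr_left fun A _ => ?_)
        simp only [Function.comp]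
        rw [msub_outCont, subst_outCont]
        rw [← msub_subst_comm hTcl hEcl (by omega)]
        rfl
      · intro A
        refine Tm.mk f' (q :: v) (T :: E) (δ q A).1 (List.nodup_cons.mpr ⟨hq, hnd⟩)
          (by simp; omega) (by simp [hlen]) ?_ ?_
        · intro s hs
          rcases List.mem_cons.mp hs with rfl | hs
          · exact hTcl
          · exact hEcl s hs
        · intro j h1 h2
          match j with
          | 0 => simpa using hTm
          | j+1 =>
            simp only [List.getElem_cons_succ]
            exact hEtm j (by simpa using h1) (by simpa using h2)


/-! ### Unfolding lemmas -/

theorem unfoldN_add (m n : Nat) (t : SType) :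
    SType.unfoldN (m + n) t = SType.unfoldN n (SType.unfoldN m t) := by
  induction n with
  | zero => rfl
  | succ n ih =>
    rw [show m + (n+1) = (m+n)+1 by omega]
    show (SType.unfoldN (m+n) t).unfold1 = (SType.unfoldN n (SType.unfoldN m t)).unfold1
    rw [ih]

theorem unfold1_inp (bs : List (Nat × SType)) :
    SType.unfold1 (.inp bs) = .inp (bs.map fun p => (p.1, p.2.unfold1)) := by
  rw [SType.unfold1, unfold1Branches_eq_map]

theorem unfold1_out (bs : List (Nat × SType)) :
    SType.unfold1 (.out bs) = .out (bs.map fun p => (p.1, p.2.unfold1)) := by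
  rw [SType.unfold1, unfold1Branches_eq_map]

theorem unfoldN_inp_mem {C : Nat} {S : SType} {bs : List (Nat × SType)}
    (h : (C, S) ∈ bs) (n : Nat) :
    ∃ bs', SType.unfoldN n (.inp bs) = .inp bs' ∧ (C, SType.unfoldN n S) ∈ bs' := by
  induction n with
  | zero => exact ⟨bs, rfl, h⟩
  | succ n ih =>
    obtain ⟨bs', hbs', hmem⟩ := ih
    refine ⟨bs'.map fun p => (p.1, p.2.unfold1), ?_, ?_⟩
    · show (SType.unfoldN n (.inp bs)).unfold1 = _
      rw [hbs', unfold1_inp]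
    · exact List.mem_map.mpr ⟨(C, SType.unfoldN n S), hmem, rfl⟩

theorem lookup_map_self {Γl : List Nat} {B : Nat} (F : Nat → SType) (hB : B ∈ Γl) :
    (Γl.map fun a => (a, F a)).lookup B = some (F B) := by
  induction Γl with
  | nil => simp at hB
  | cons a rest ih =>
    by_cases hBa : B = a
    · simp [List.lookup, hBa]
    · have hmm : B ∈ rest := by rcases List.mem_cons.mp hB with h | h; omega; exact h
      have hba : (B == a) = false := beq_eq_false_iff_ne.mpr hBa
      simp [List.lookup, hba, ih hmm]

theorem unfold1_SNil (Γl : List Nat) :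
    SType.unfold1 (BsemSNil Γl) = .out (Γl.map fun A => (A, BsemS Γl [A])) := by
  show SType.subst (BsemSNil Γl) 0 _ = _
  rw [SType.subst, substBranches_eq_map, List.map_map]
  refine congrArg SType.out (List.map_congr_left fun A _ => ?_)
  simp only [Function.comp]
  rw [SType.subst, substBranches_eq_map, List.map_map]
  show (A, SType.inp _) = (A, BsemS Γl [A])
  simp only [BsemS]
  refine congrArg _ (congrArg SType.inp (List.map_congr_left fun B _ => ?_))
  by_cases hBA : B = A
  · subst hBA
    simp [SType.subst]
  · simp only [Function.comp_apply]
    rw [if_neg hBA, if_neg hBA]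
    rw [(Cl_Tpp Γl).subst_id (Nat.le_refl 0)]

theorem unfoldN_SNil_succ (Γl : List Nat) (k : Nat) :
    SType.unfoldN (k+1) (BsemSNil Γl) =
      .out (Γl.map fun A => (A, SType.unfoldN k (BsemS Γl [A]))) := by
  induction k with
  | zero =>
    show (SType.unfoldN 0 (BsemSNil Γl)).unfold1 = _
    rw [show SType.unfoldN 0 (BsemSNil Γl) = BsemSNil Γl from rfl, unfold1_SNil]
    rfl
  | succ k ih =>
    show (SType.unfoldN (k+1) (BsemSNil Γl)).unfold1 = _
    rw [ih, unfold1_out, List.map_map]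
    exact congrArg SType.out (List.map_congr_left fun A _ => rfl)

/-! ### The predicate `SQ S α`: `S` is a representation of queue `α` -/

inductive SQ (Γl : List Nat) : SType → List Nat → Prop
  | nil (n : Nat) : SQ Γl (SType.unfoldN n (BsemSNil Γl)) []
  | cons {C : Nat} {α : List Nat} {S : SType} (bs : List (Nat × SType)) :
      SQ Γl S α → (C, S) ∈ bs → SQ Γl (.inp bs) (C :: α)

theorem SQ_unfoldN {Γl : List Nat} {S : SType} {α : List Nat} (h : SQ Γl S α) :
    ∀ n, SQ Γl (SType.unfoldN n S) α := by
  induction h with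
  | nil m =>
    intro n
    rw [← unfoldN_add]
    exact SQ.nil (m + n)
  | cons bs h hmem ih =>
    intro n
    obtain ⟨bs', hbs', hmem'⟩ := unfoldN_inp_mem hmem n
    rw [hbs']
    exact SQ.cons bs' (ih n) hmem'

theorem SQ_BsemS {Γl : List Nat} : ∀ {α : List Nat}, (∀ a ∈ α, a ∈ Γl) →
    SQ Γl (BsemS Γl α) α := by
  intro α
  induction α with
  | nil => intro _; exact SQ.nil 0
  | cons C rest ih =>
    intro hα
    refine SQ.cons _ (ih fun a ha => hα a (by simp [ha])) ?_
    exact List.mem_map.mpr ⟨C, hα C (by simp), by simp⟩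

theorem holes_sub {cbs : List (Nat × ICtx)} {C : Nat} {A' : ICtx}
    (h : (C, A') ∈ cbs) : ∀ j ∈ A'.holes, j ∈ (ICtx.inp cbs).holes := by
  intro j hj
  show j ∈ holesBranches cbs
  induction cbs with
  | nil => simp at h
  | cons p rest ih =>
    rcases List.mem_cons.mp h with rfl | hmem
    · exact List.mem_append.mpr (Or.inl hj)
    · exact List.mem_append.mpr (Or.inr (ih hmem))

theorem decompose_follow {Γl : List Nat} {S : SType} {β : List Nat} (h : SQ Γl S β) :
    ∀ (n : Nat) (Actx : ICtx) (Sb : Nat → List (Nat × SType)) (g : Nat → SType) (B : Nat),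
      B ∈ Γl →
      Actx.fill (fun k => .out (Sb k)) = SType.unfoldN n S →
      (∀ k ∈ Actx.holes, (Sb k).lookup B = some (g k)) →
      SQ Γl (Actx.fill g) (β ++ [B]) := by
  induction h with
  | nil m =>
    intro n Actx Sb g B hB hfill hg
    rw [← unfoldN_add] at hfill
    match hmn : m + n with
    | 0 =>
      rw [hmn] at hfill
      cases Actx with
      | hole j => simp [ICtx.fill, BsemSNil, SType.unfoldN] at hfill
      | inp cbs => simp [ICtx.fill, BsemSNil, SType.unfoldN] at hfill
    | k+1 =>
      rw [hmn, unfoldN_SNil_succ] at hfill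
      cases Actx with
      | inp cbs => simp [ICtx.fill] at hfill
      | hole j =>
        simp only [ICtx.fill] at hfill
        have hSb : Sb j = Γl.map fun A => (A, SType.unfoldN k (BsemS Γl [A])) := by
          injection hfill
        have hj := hg j (by simp [ICtx.holes])
        rw [hSb, lookup_map_self _ hB] at hj
        have hgj : g j = SType.unfoldN k (BsemS Γl [B]) := (Option.some.inj hj).symm
        show SQ Γl (g j) ([] ++ [B])
        rw [hgj]
        exact SQ_unfoldN (SQ_BsemS (by simpa using hB)) k
  | cons bs h hmem ih =>
    intro n Actx Sb g B hB hfill hg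
    obtain ⟨bs', hbs', hmem'⟩ := unfoldN_inp_mem hmem n
    rw [hbs'] at hfill
    cases Actx with
    | hole j => simp [ICtx.fill] at hfill
    | inp cbs =>
      simp only [ICtx.fill] at hfill
      have hfb : fillBranches cbs (fun k => .out (Sb k)) = bs' := by injection hfill
      rw [← hfb, fillBranches_eq_map] at hmem'
      obtain ⟨p, hp, hpe⟩ := List.mem_map.mp hmem'
      obtain ⟨pc, pA⟩ := p
      obtain ⟨hpc, hpA⟩ := Prod.mk.injEq .. ▸ hpe
      subst hpc
      have hrec := ih n pA Sb g B hB hpA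
        (fun k hk => hg k (holes_sub hp k hk))
      show SQ Γl (.inp (fillBranches cbs g)) _
      rw [fillBranches_eq_map, List.cons_append]
      exact SQ.cons _ hrec (List.mem_map.mpr ⟨(pc, pA), hp, rfl⟩)


/-! ### Simulation of machine steps -/

theorem output_lemma {Γl : List Nat} {R : SType → SType → Prop}
    (hR : IsAsyncSubRel R) :
    ∀ (γ : List Nat), (∀ b ∈ γ, b ∈ Γl) →
      ∀ {T₀ S₁ : SType} {β : List Nat},
        R (outCont Γl γ T₀) S₁ → SQ Γl S₁ β →
        ∃ S₂, R T₀ S₂ ∧ SQ Γl S₂ (β ++ γ) := by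
  intro γ
  induction γ with
  | nil => intro _ T₀ S₁ β hr hsq; exact ⟨S₁, hr, by simpa using hsq⟩
  | cons B rest ih =>
    intro hγ T₀ S₁ β hr hsq
    have hB : B ∈ Γl := hγ B (by simp)
    obtain ⟨-, hout, -, -⟩ := hR _ _ hr
    obtain ⟨n, Actx, Sb, _, hfill, _, hbr, _⟩ :=
      hout (Γl.map fun A' => (A', if A' = B then outCont Γl rest T₀ else Tp Γl)) rfl
    obtain ⟨g, hg, hrg⟩ := hbr B (outCont Γl rest T₀)
      (List.mem_map.mpr ⟨B, hB, by simp⟩)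
    have hsq' : SQ Γl (Actx.fill g) (β ++ [B]) :=
      decompose_follow hsq n Actx Sb g B hB hfill.symm hg
    obtain ⟨S₂, hr₂, hsq₂⟩ := ih (fun b hb => hγ b (by simp [hb])) hrg hsq'
    exact ⟨S₂, hr₂, by simpa [List.append_assoc] using hsq₂⟩

theorem step_lemma {Q : Type} [Fintype Q] [DecidableEq Q]
    (M : QM Q Nat) (Γl : List Nat)
    (hdelta : ∀ q a, a ∈ Γl → ∀ b ∈ (M.delta q a).2, b ∈ Γl)
    {R : SType → SType → Prop} (hR : IsAsyncSubRel R)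
    {b c' : Q × List Nat} (hstep : QStep M b c')
    (hb : (∀ a ∈ b.2, a ∈ Γl) ∧
      ∃ T S, Tm M.delta Γl (Fintype.card Q + 1) T b.1 ∧ SQ Γl S b.2 ∧ R T S) :
    (∀ a ∈ c'.2, a ∈ Γl) ∧
      ∃ T S, Tm M.delta Γl (Fintype.card Q + 1) T c'.1 ∧ SQ Γl S c'.2 ∧ R T S := by
  obtain ⟨A, α, h2, h3⟩ := hstep
  obtain ⟨q, queue⟩ := b
  simp only at h2 h3
  subst h2
  obtain ⟨hall, T, S, hTm, hSQ, hRTS⟩ := hb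
  have hA : A ∈ Γl := hall A (by simp)
  have hα : ∀ a ∈ α, a ∈ Γl := fun a ha => hall a (by simp [ha])
  have hγ : ∀ bb ∈ (M.delta q A).2, bb ∈ Γl := hdelta q A hA
  obtain ⟨Bod, g, rfl, hsubst, hg⟩ := Tm_structure hTm
  have h4 := (hR _ _ hRTS).2.2.2 Bod rfl
  rw [hsubst] at h4
  cases hSQ with
  | cons bs hS0 hmem =>
  obtain ⟨n, Sb, hunf, -, -, hlook⟩ := (hR _ _ h4).2.2.1 _ rfl
  obtain ⟨bs', hbs', hmem'⟩ := unfoldN_inp_mem hmem n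
  rw [hunf] at hbs'
  have hSb : Sb = bs' := by injection hbs'
  subst hSb
  obtain ⟨Tj, hTj, hRTj⟩ := hlook A _ hmem'
  rw [lookup_map_self (fun A' => outCont Γl (M.delta q A').2 (g A')) hA] at hTj
  have hTjeq : Tj = outCont Γl (M.delta q A).2 (g A) := (Option.some.inj hTj).symm
  subst hTjeq
  obtain ⟨S₂, hr₂, hsq₂⟩ := output_lemma hR (M.delta q A).2 hγ hRTj
    (SQ_unfoldN hS0 n)
  subst h3
  refine ⟨?_, g A, S₂, hg A, hsq₂, hr₂⟩
  intro a ha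
  simp only at ha
  rcases List.mem_append.mp ha with h | h
  · exact hα a h
  · exact hγ a h

theorem invariant_steps {Q : Type} [Fintype Q] [DecidableEq Q]
    (M : QM Q Nat) (Γl : List Nat)
    (hdelta : ∀ q a, a ∈ Γl → ∀ b ∈ (M.delta q a).2, b ∈ Γl)
    {R : SType → SType → Prop} (hR : IsAsyncSubRel R)
    {c c' : Q × List Nat} (hsteps : QSteps M c c')
    (hc : (∀ a ∈ c.2, a ∈ Γl) ∧
      ∃ T S, Tm M.delta Γl (Fintype.card Q + 1) T c.1 ∧ SQ Γl S c.2 ∧ R T S) :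
    (∀ a ∈ c'.2, a ∈ Γl) ∧
      ∃ T S, Tm M.delta Γl (Fintype.card Q + 1) T c'.1 ∧ SQ Γl S c'.2 ∧ R T S := by
  induction hsteps with
  | refl => exact hc
  | tail _ hbc ih => exact step_lemma M Γl hdelta hR hbc ih

end QMProof






/-- if a single consuming queue machine `M` accepts input `x`
(reaches the empty queue from `(s, x$)`), then `[[s]]^∅ ≰ [[x$]]`; in
particular, if `[[s]]^∅ ≤ [[x$]]` then `M` does not terminate on `x`. -/
theorem accept_implies_not_subtype {Q : Type} [Fintype Q] [DecidableEq Q]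
    (M : QM Q Nat) (Γl : List Nat) (hnd : Γl.Nodup)
    (hdelta : ∀ q a, a ∈ Γl → ∀ b ∈ (M.delta q a).2, b ∈ Γl)
    (hsc : SingleConsuming M)
    (s : Q) (x : List Nat) (dollar : Nat)
    (hx : ∀ c ∈ x, c ∈ Γl) (hd : dollar ∈ Γl) :
    ((∃ q, QSteps M (s, x ++ [dollar]) (q, [])) →
        ¬ Subt (BsemT M.delta Γl s) (BsemS Γl (x ++ [dollar]))) ∧
    (Subt (BsemT M.delta Γl s) (BsemS Γl (x ++ [dollar])) →
        ¬ ∃ q, QSteps M (s, x ++ [dollar]) (q, [])) := by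
  have main : (∃ q, QSteps M (s, x ++ [dollar]) (q, [])) →
      ¬ Subt (BsemT M.delta Γl s) (BsemS Γl (x ++ [dollar])) := by
    rintro ⟨q, hq⟩ ⟨R, hR, hTS⟩
    have hall : ∀ a ∈ x ++ [dollar], a ∈ Γl := by
      intro a ha
      rcases List.mem_append.mp ha with h | h
      · exact hx a h
      · simp at h; subst h; exact hd
    have hTm0 : QMProof.Tm M.delta Γl (Fintype.card Q + 1) (BsemT M.delta Γl s) s :=
      QMProof.Tm.mk (Fintype.card Q + 1) [] [] s (by simp) (by simp) rfl
        (by simp) (fun j h1 h2 => absurd h1 (by simp))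
    have hfin := QMProof.invariant_steps M Γl hdelta hR hq
      ⟨hall, _, _, hTm0, QMProof.SQ_BsemS hall, hTS⟩
    obtain ⟨-, T, S, hTm, hSQ, hRTS⟩ := hfin
    obtain ⟨Bod, g, rfl, hsubst, -⟩ := QMProof.Tm_structure hTm
    have h4 := (hR _ _ hRTS).2.2.2 Bod rfl
    rw [hsubst] at h4
    obtain ⟨n, Sb, hunf, -⟩ := (hR _ _ h4).2.2.1 _ rfl
    cases hSQ with
    | nil m =>
    rw [show SType.unfoldN n (SType.unfoldN m (BsemSNil Γl)) =
        SType.unfoldN (m+n) (BsemSNil Γl) from (QMProof.unfoldN_add m n _).symm] at hunf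
    cases hmn : m + n with
    | zero =>
      rw [hmn] at hunf
      simp [SType.unfoldN, BsemSNil] at hunf
    | succ k =>
      rw [hmn, QMProof.unfoldN_SNil_succ] at hunf
      simp at hunf
  exact ⟨main, fun hsub hacc => main hacc hsub⟩
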